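/- Let B be the differential operator Bf = f' + (2πia/b) t f. For f ∈ S(ℝ), 𝓕_A(Bf)(ω) = 2πi ((ω − p)/b) 𝓕_A(f)(ω). -/

import Mathlib

open MeasureTheory Complex

noncomputable def SAFT (a b d p q : ℝ) (f : ℝ → ℂ) (ω : ℝ) : ℂ :=
  (1 / Real.sqrt |b|) *
    ∫ t : ℝ, f t *
      Complex.exp ((Real.pi * Complex.I / b) *
        (a * t ^ 2 + 2 * p * t - 2 * ω * t + 2 * (b * q - d * p) * ω + d * ω ^ 2))

theorem SAFT_of_B (a b c d p q : ℝ) (hb : b ≠ 0) (hA : a * d - b * c = 1)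
    (f : SchwartzMap ℝ ℂ) (ω : ℝ) :
    SAFT a b d p q
        (fun t => deriv (⇑f) t + (2 * Real.pi * Complex.I * a / b) * t * f t) ω =
      2 * Real.pi * Complex.I * ((ω - p) / b) * SAFT a b d p q (⇑f) ω := by
  have hbC : (b : ℂ) ≠ 0 := by exact_mod_cast hb
  set R : ℝ → ℝ := fun t => a * t ^ 2 + (2 * p - 2 * ω) * t +
    (2 * (b * q - d * p) * ω + d * ω ^ 2) with hRdef
  set R' : ℝ → ℝ := fun t => 2 * a * t + (2 * p - 2 * ω) with hR'def
  set e : ℝ → ℂ := fun t => Complex.exp ((Real.pi * Complex.I / b) * (R t : ℂ)) with hedef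
  -- the kernel of SAFT equals e
  have harg : ∀ t : ℝ, ((Real.pi : ℂ) * Complex.I / (b : ℂ)) *
      ((a : ℂ) * (t : ℂ) ^ 2 + 2 * (p : ℂ) * (t : ℂ) - 2 * (ω : ℂ) * (t : ℂ) +
        2 * ((b : ℂ) * (q : ℂ) - (d : ℂ) * (p : ℂ)) * (ω : ℂ) + (d : ℂ) * (ω : ℂ) ^ 2)
      = (Real.pi * Complex.I / b) * (R t : ℂ) := by
    intro t
    rw [hRdef]
    push_cast
    ring
  -- norm of e
  have henorm : ∀ t, ‖e t‖ = 1 := by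
    intro t
    have h1 : ((Real.pi : ℂ) * Complex.I / b) * (R t : ℂ)
        = ((Real.pi * R t / b : ℝ) : ℂ) * Complex.I := by push_cast; ring
    rw [hedef]
    simp only [h1]
    exact Complex.norm_exp_ofReal_mul_I _
  have econt : Continuous e := by
    rw [hedef]
    fun_prop
  -- derivative of e
  have hederiv : ∀ t : ℝ, HasDerivAt e
      (e t * (((Real.pi : ℂ) * Complex.I / b) * (R' t : ℂ))) t := by
    intro t
    have hRd : HasDerivAt R (R' t) t := by
      have h1 : HasDerivAt (fun s : ℝ => a * s ^ 2) (a * (2 * t ^ 1)) t :=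
        (hasDerivAt_pow 2 t).const_mul a
      have h2 : HasDerivAt (fun s : ℝ => (2 * p - 2 * ω) * s) ((2 * p - 2 * ω) * 1) t :=
        (hasDerivAt_id t).const_mul (2 * p - 2 * ω)
      have h3 := (h1.add h2).add_const (2 * (b * q - d * p) * ω + d * ω ^ 2)
      have : a * (2 * t ^ 1) + (2 * p - 2 * ω) * 1 = R' t := by rw [hR'def]; ring
      rw [this] at h3
      exact h3
    have := ((hRd.ofReal_comp).const_mul ((Real.pi : ℂ) * Complex.I / b)).cexp
    simpa [hedef] using this
  -- integrability facts
  have hInt_h : Integrable (fun t => f t * e t) := by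
    refine (f.integrable (μ := volume)).norm.mono' ?_ ?_
    · exact (f.continuous.mul econt).aestronglyMeasurable
    · filter_upwards with t
      simp [henorm t]
  have hderivf_eq : deriv (⇑f) = ⇑(SchwartzMap.derivCLM ℝ ℂ f) := by
    ext t; simp [SchwartzMap.derivCLM_apply]
  have hInt1 : Integrable (fun t => deriv (⇑f) t * e t) := by
    rw [hderivf_eq]
    refine ((SchwartzMap.derivCLM ℝ ℂ f).integrable (μ := volume)).norm.mono' ?_ ?_
    · exact ((SchwartzMap.derivCLM ℝ ℂ f).continuous.mul econt).aestronglyMeasurable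
    · filter_upwards with t
      simp [henorm t]
  have hInt2 : Integrable (fun t =>
      f t * (e t * (((Real.pi : ℂ) * Complex.I / b) * (R' t : ℂ)))) := by
    have hg : Integrable (fun t : ℝ =>
        (Real.pi / |b| * (2 * |a|)) * (‖t‖ ^ 1 * ‖f t‖) +
        (Real.pi / |b| * |2 * p - 2 * ω|) * (‖t‖ ^ 0 * ‖f t‖)) :=
      ((f.integrable_pow_mul volume 1).const_mul _).add
        ((f.integrable_pow_mul volume 0).const_mul _)
    refine hg.mono' ?_ ?_
    · apply Continuous.aestronglyMeasurable
      fun_prop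
    · filter_upwards with t
      have hR'b : |R' t| ≤ 2 * |a| * |t| + |2 * p - 2 * ω| := by
        rw [hR'def]
        calc |2 * a * t + (2 * p - 2 * ω)| ≤ |2 * a * t| + |2 * p - 2 * ω| := abs_add_le _ _
        _ = 2 * |a| * |t| + |2 * p - 2 * ω| := by rw [abs_mul, abs_mul]; simp [abs_of_nonneg]
      have hc : ‖((Real.pi : ℂ) * Complex.I / b)‖ = Real.pi / |b| := by
        rw [norm_div, norm_mul, Complex.norm_I, mul_one, Complex.norm_real,
          Complex.norm_real, Real.norm_eq_abs, Real.norm_eq_abs,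
          _root_.abs_of_nonneg Real.pi_pos.le]
      have hnorm : ‖f t * (e t * (((Real.pi : ℂ) * Complex.I / b) * (R' t : ℂ)))‖
          = ‖f t‖ * (Real.pi / |b| * |R' t|) := by
        rw [norm_mul, norm_mul, henorm t, one_mul, norm_mul, hc, Complex.norm_real,
          Real.norm_eq_abs]
      rw [hnorm]
      have hb' : 0 ≤ Real.pi / |b| := div_nonneg Real.pi_pos.le (abs_nonneg b)
      calc ‖f t‖ * (Real.pi / |b| * |R' t|)
          ≤ ‖f t‖ * (Real.pi / |b| * (2 * |a| * |t| + |2 * p - 2 * ω|)) := by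
            apply mul_le_mul_of_nonneg_left _ (norm_nonneg _)
            exact mul_le_mul_of_nonneg_left hR'b hb'
        _ = (Real.pi / |b| * (2 * |a|)) * (‖t‖ ^ 1 * ‖f t‖) +
            (Real.pi / |b| * |2 * p - 2 * ω|) * (‖t‖ ^ 0 * ‖f t‖) := by
            simp [Real.norm_eq_abs]
            ring
  -- derivative of h = f * e
  have hhderiv : ∀ t : ℝ, HasDerivAt (fun t => f t * e t)
      (deriv (⇑f) t * e t +
        f t * (e t * (((Real.pi : ℂ) * Complex.I / b) * (R' t : ℂ)))) t := by
    intro t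
    exact ((f.differentiableAt.hasDerivAt)).mul (hederiv t)
  have hInt_h' : Integrable (fun t => deriv (⇑f) t * e t +
      f t * (e t * (((Real.pi : ℂ) * Complex.I / b) * (R' t : ℂ)))) := hInt1.add hInt2
  have hzero : (∫ t : ℝ, (deriv (⇑f) t * e t +
      f t * (e t * (((Real.pi : ℂ) * Complex.I / b) * (R' t : ℂ))))) = 0 :=
    integral_eq_zero_of_hasDerivAt_of_integrable hhderiv hInt_h' hInt_h
  -- pointwise decomposition of the LHS integrand
  have hpt : ∀ t : ℝ, (deriv (⇑f) t + (2 * Real.pi * Complex.I * a / b) * (t : ℂ) * f t) * e t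
      = (deriv (⇑f) t * e t +
          f t * (e t * (((Real.pi : ℂ) * Complex.I / b) * (R' t : ℂ)))) +
        (2 * Real.pi * Complex.I * (((ω : ℂ) - p) / b)) * (f t * e t) := by
    intro t
    have : ((R' t : ℝ) : ℂ) = 2 * a * t + (2 * p - 2 * ω) := by rw [hR'def]; push_cast; ring
    rw [this]
    field_simp
    ring
  -- main computation
  have key : (∫ t : ℝ, (deriv (⇑f) t + (2 * Real.pi * Complex.I * a / b) * (t : ℂ) * f t) * e t)
      = (2 * Real.pi * Complex.I * (((ω : ℂ) - p) / b)) * ∫ t : ℝ, f t * e t := by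
    rw [integral_congr_ae (Filter.Eventually.of_forall hpt)]
    rw [integral_add hInt_h' (hInt_h.const_mul _), hzero, zero_add,
      integral_const_mul]
  -- finish
  unfold SAFT
  simp only [harg]
  rw [key]
  ring
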